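/- Let f : X → Z be a morphism of schemes. For complexes E on X and F, G on Z, the following diagram built from the projection-formula maps commutes: starting from (Rf_*E ⊗ F) ⊗ G, applying the projection map in F then in G and then the monoidality isomorphism Lf*(F ⊗ G) ≅ Lf*F ⊗ Lf*G agrees with first using associativity (Rf_*E ⊗ F) ⊗ G ≅ Rf_*E ⊗ (F ⊗ G) and then the projection map for F ⊗ G. -/

import Mathlib

open CategoryTheory MonoidalCategory

noncomputable section

variable {CX CZ : Type*} [Category CX] [Category CZ]
  [MonoidalCategory CX] [MonoidalCategory CZ]

/-- The projection map `f_*E ⊗ F ⟶ f_*(E ⊗ f^*F)` of (2.6.3), defined via the unit of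
the adjunction `f^* ⊣ f_*` and the lax monoidal structure of `f_*`. -/
def projMap (fstar : CZ ⥤ CX) [fstar.Monoidal] (fpush : CX ⥤ CZ)
    (adj : fstar ⊣ fpush) [fpush.LaxMonoidal] [adj.IsMonoidal] (E : CX) (F : CZ) :
    fpush.obj E ⊗ F ⟶ fpush.obj (E ⊗ fstar.obj F) :=
  (fpush.obj E ◁ adj.unit.app F) ≫ Functor.LaxMonoidal.μ fpush E (fstar.obj F)

/-- Lemma 2.7: compatibility of the projection map with derived tensor product, stated
for an abstract adjunction `f^* ⊣ f_*` with `f^*` (strong) monoidal (so `f_*` is lax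
monoidal); this models `Lf^* ⊣ Rf_*` for a scheme map `f : X → Z`. -/
theorem stmt10 (fstar : CZ ⥤ CX) [fstar.Monoidal] (fpush : CX ⥤ CZ)
    (adj : fstar ⊣ fpush) [fpush.LaxMonoidal] [adj.IsMonoidal] (E : CX) (F G : CZ) :
    (projMap fstar fpush adj E F ▷ G) ≫ projMap fstar fpush adj (E ⊗ fstar.obj F) G ≫
        fpush.map (α_ E (fstar.obj F) (fstar.obj G)).hom =
      (α_ (fpush.obj E) F G).hom ≫ projMap fstar fpush adj E (F ⊗ G) ≫
        fpush.map (E ◁ Functor.OplaxMonoidal.δ fstar F G) := by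
  simp only [projMap, comp_whiskerRight, Category.assoc, ← Functor.LaxMonoidal.μ_natural_right]
  rw [← MonoidalCategory.whiskerLeft_comp_assoc, Adjunction.unit_app_tensor_comp_map_δ,
    ← whisker_exchange_assoc]
  dsimp only [Functor.comp_obj]
  rw [Functor.LaxMonoidal.associativity]
  simp only [MonoidalCategory.tensorHom_def, MonoidalCategory.whiskerLeft_comp, Category.assoc,
    Functor.comp_obj, Functor.id_obj]
  rw [associator_naturality_right_assoc, associator_naturality_middle_assoc]

end
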